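/- A triangle functor F : A → B between triangulated categories is faithful if and only if it reflects split monomorphisms; i.e., F is faithful iff whenever F(u) is a split monomorphism in B, the morphism u is already a split monomorphism in A. -/

import Mathlib

open CategoryTheory CategoryTheory.Limits CategoryTheory.Pretriangulated

universe v₁ v₂ u₁ u₂

variable {A : Type u₁} {B : Type u₂} [Category.{v₁} A] [Category.{v₂} B]
  [Preadditive A] [Preadditive B] [HasZeroObject A] [HasZeroObject B]
  [HasShift A ℤ] [HasShift B ℤ]
  [∀ n : ℤ, (shiftFunctor A n).Additive] [∀ n : ℤ, (shiftFunctor B n).Additive]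
  [Pretriangulated A] [Pretriangulated B] [IsTriangulated A] [IsTriangulated B]


/-- A triangle functor is faithful iff it reflects split monomorphisms (RSM). -/
theorem stmt4 (F : A ⥤ B) [F.CommShift ℤ] [F.IsTriangulated] :
    F.Faithful ↔
      ∀ (X Y : A) (u : X ⟶ Y), IsSplitMono (F.map u) → IsSplitMono u := by
  constructor
  · intro hF X Y u hu
    obtain ⟨Z, v, w, hT⟩ := distinguished_cocone_triangle u
    have hT' := F.map_distinguished _ hT
    have h3 : (F.mapTriangle.obj (Triangle.mk u v w)).mor₃ = 0 :=
      Triangle.mor₃_eq_zero_of_mono₁ _ hT' (by dsimp [Functor.mapTriangle, Triangle.mk]; infer_instance)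
    have hw : F.map w = 0 := by
      dsimp [Functor.mapTriangle] at h3
      rw [← cancel_mono ((F.commShiftIso (1 : ℤ)).hom.app X)]
      rw [zero_comp]; exact h3
    have hw0 : w = 0 := F.map_injective (by simpa using hw)
    haveI : Mono u := (Triangle.mk u v w).mono₁ hT hw0
    exact isSplitMono_of_mono u
  · intro h
    refine ⟨fun {X Y} f g hfg => ?_⟩
    suffices hs : f - g = 0 by
      rw [← sub_eq_zero]; exact hs
    set d := f - g with hd
    obtain ⟨Z, v, w, hT⟩ := distinguished_cocone_triangle d
    have hFd : F.map d = 0 := by rw [hd, F.map_sub, hfg, sub_self]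
    have hT' := rot_of_distTriang _ (F.map_distinguished _ hT)
    have h3 : ((F.mapTriangle.obj (Triangle.mk d v w)).rotate).mor₃ = 0 := by
      dsimp [Functor.mapTriangle, Triangle.rotate, Triangle.mk]
      rw [hFd]
      simp
      rfl
    have hFv : IsSplitMono (F.map v) := by
      have := Triangle.mono₁ _ hT' h3
      dsimp [Functor.mapTriangle, Triangle.rotate, Triangle.mk] at this
      haveI := this
      exact isSplitMono_of_mono _
    have hv : IsSplitMono v := h _ _ v hFv
    have hTr := rot_of_distTriang _ hT
    have h3' : ((Triangle.mk d v w).rotate).mor₃ = 0 :=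
      Triangle.mor₃_eq_zero_of_mono₁ _ hTr (by dsimp [Triangle.rotate, Triangle.mk]; infer_instance)
    dsimp [Triangle.rotate, Triangle.mk] at h3'
    have : d⟦(1 : ℤ)⟧' = 0 := by
      have := neg_eq_zero.mp h3'
      simpa using this
    exact (shiftFunctor A (1 : ℤ)).map_injective (by simpa using this)
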